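/- Let W be a nonempty set of edges and h a pairwise-independent uniform hash function from edge names to [1, 2^ℓ] with 2^ℓ ≥ 4|W|. For i = ℓ − ⌈log₂|W|⌉ − 2, the probability that exactly one edge of W hashes into the range [1, 2^i] is at least 1/16. -/

import Mathlib

open MeasureTheory ProbabilityTheory

/-- A set whose measure plus its complement's measure is at most the total mass
is null-measurable (for a probability measure). -/
lemma aux_nullMeasurable {Ω : Type} [MeasurableSpace Ω] (μ : Measure Ω)
    [IsProbabilityMeasure μ] (s : Set Ω) (hs : μ s + μ sᶜ ≤ 1) :
    NullMeasurableSet s μ := by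
  set B := toMeasurable μ s with hB
  set C := toMeasurable μ sᶜ with hC
  have hBC : B ∪ C = Set.univ := by
    apply Set.eq_univ_of_univ_subset
    rw [← Set.union_compl_self s]
    exact Set.union_subset_union (subset_toMeasurable μ s) (subset_toMeasurable μ sᶜ)
  have h1 : μ (B ∪ C) + μ (B ∩ C) = μ B + μ C :=
    measure_union_add_inter B (measurableSet_toMeasurable μ sᶜ)
  have h2 : μ (B ∪ C) = 1 := by rw [hBC]; exact measure_univ
  have h3 : μ B + μ C ≤ 1 := by
    rw [hB, hC, measure_toMeasurable, measure_toMeasurable]; exact hs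
  have h4 : μ (B ∩ C) = 0 := by
    rw [h2] at h1
    have h5 : 1 + μ (B ∩ C) ≤ 1 + 0 := by
      rw [add_zero]; exact h1 ▸ h3
    have h6 : μ (B ∩ C) ≤ 0 :=
      (ENNReal.add_le_add_iff_left ENNReal.one_ne_top).mp h5
    exact le_antisymm h6 zero_le
  have hsub : B \ s ⊆ B ∩ C := fun x hx =>
    Set.mem_inter hx.1 (subset_toMeasurable μ sᶜ hx.2)
  have h5 : μ (B \ s) = 0 := measure_mono_null hsub h4
  refine (measurableSet_toMeasurable μ s).nullMeasurableSet.congr ?_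
  rw [MeasureTheory.ae_eq_set]
  constructor
  · exact h5
  · have : s \ B = ∅ := Set.diff_eq_empty.mpr (subset_toMeasurable μ s)
    rw [this]; exact measure_empty

/-- Cancellation identity in `ℝ≥0∞`: `m * (m * c)⁻¹ = c⁻¹` for a nonzero natural `m`. -/
lemma aux_frac (m : ℕ) (c : ENNReal) (hm : m ≠ 0) :
    (m : ENNReal) * ((m : ENNReal) * c)⁻¹ = c⁻¹ := by
  rw [ENNReal.mul_inv (Or.inl (Nat.cast_ne_zero.mpr hm)) (Or.inl (ENNReal.natCast_ne_top m)),
    ← mul_assoc, ENNReal.mul_inv_cancel (Nat.cast_ne_zero.mpr hm) (ENNReal.natCast_ne_top m),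
    one_mul]

/-- The numeric inequality `1/16 + N² p² ≤ N p` for `p = c⁻¹`, given the
cleared-denominator version. -/
lemma aux_num (N : ℕ) (c : ENNReal) (hc0 : c ≠ 0) (hc0' : c ≠ ⊤)
    (hle : c ^ 2 + 16 * ((N : ENNReal) * N) ≤ 16 * ((N : ENNReal) * c)) :
    1 / 16 + (N : ENNReal) * ((N : ENNReal) * (c⁻¹) ^ 2) ≤ (N : ENNReal) * c⁻¹ := by
  rw [← ENNReal.mul_le_mul_iff_left (c := 16 * c ^ 2)
    (mul_ne_zero (by norm_num) (pow_ne_zero _ hc0))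
    (ENNReal.mul_ne_top (by norm_num) (ENNReal.pow_ne_top hc0'))]
  have hinv : c⁻¹ * c = 1 := ENNReal.inv_mul_cancel hc0 hc0'
  have h16 : (1 / 16 : ENNReal) * 16 = 1 := by
    rw [one_div]; exact ENNReal.inv_mul_cancel (by norm_num) (by norm_num)
  calc (1 / 16 + (N : ENNReal) * ((N : ENNReal) * (c⁻¹) ^ 2)) * (16 * c ^ 2)
      = (1 / 16 * 16) * c ^ 2 + 16 * ((N : ENNReal) * N) * (c⁻¹ * c) ^ 2 := by ring
    _ = c ^ 2 + 16 * ((N : ENNReal) * N) := by rw [hinv, h16]; ring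
    _ ≤ 16 * ((N : ENNReal) * c) := hle
    _ = (N : ENNReal) * c⁻¹ * (16 * c ^ 2) := by
        rw [show (N : ENNReal) * c⁻¹ * (16 * c ^ 2)
          = 16 * ((N : ENNReal) * c) * (c⁻¹ * c) by ring, hinv, mul_one]

/-- For a pairwise-independent uniform hash `h` of edge names into `[1, 2^ℓ]` with
`2^ℓ ≥ 4|W|` and `i = ℓ - ⌈log₂ |W|⌉ - 2`, the probability that exactly one edge of the
nonempty set `W` hashes into `[1, 2^i]` is at least `1/16`. -/
theorem stmt_7 {α : Type} [DecidableEq α] {Ω : Type} [MeasurableSpace Ω]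
    (μ : Measure Ω) [IsProbabilityMeasure μ]
    (ℓ : ℕ) (W : Finset α) (hW : W.Nonempty)
    (h : α → Ω → ℕ)
    (hrange : ∀ e ω, h e ω ∈ Finset.Icc 1 (2 ^ ℓ))
    (hunif : ∀ e, ∀ t ∈ Finset.Icc 1 (2 ^ ℓ),
      μ {ω | h e ω = t} = 1 / (2 : ENNReal) ^ ℓ)
    (hpair : ∀ e e', e ≠ e' → ∀ s t : ℕ,
      μ ({ω | h e ω = s} ∩ {ω | h e' ω = t}) =
        μ {ω | h e ω = s} * μ {ω | h e' ω = t})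
    (hbig : 4 * W.card ≤ 2 ^ ℓ)
    (i : ℤ) (hi : i = (ℓ : ℤ) - ⌈Real.logb 2 (W.card : ℝ)⌉ - 2) :
    1 / 16 ≤ μ {ω | ∃! e, e ∈ W ∧ (h e ω : ℝ) ≤ (2 : ℝ) ^ i} := by
  classical
  set N := W.card with hNdef
  have hNpos : 0 < N := hW.card_pos
  set k := Nat.clog 2 N with hkdef
  have hceil : ⌈Real.logb 2 (N : ℝ)⌉ = (k : ℤ) := by
    rw [show (2 : ℝ) = ((2 : ℕ) : ℝ) by norm_num,
      Real.ceil_logb_natCast (Nat.cast_nonneg N), Int.clog_natCast]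
  have hNle : N ≤ 2 ^ k := Nat.le_pow_clog one_lt_two N
  have hlt : 2 ^ k < 2 * N := by
    rcases eq_or_lt_of_le (Nat.succ_le_of_lt hNpos) with h1 | h1
    · have hk0 : k = 0 := by rw [hkdef, ← h1]; simp
      rw [hk0]; omega
    · have hk1 : 0 < k := Nat.clog_pos one_lt_two h1
      have hlt' : 2 ^ (k - 1) < N := by
        simpa [Nat.pred_eq_sub_one] using Nat.pow_pred_clog_lt_self one_lt_two h1
      have hsplit : 2 ^ k = 2 * 2 ^ (k - 1) := by
        rw [← pow_succ']; congr 1; omega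
      omega
  have hl2 : 2 ≤ ℓ := by
    by_contra hc
    push_neg at hc
    interval_cases ℓ <;> omega
  have hkl : k + 2 ≤ ℓ := by
    have h1 : N ≤ 2 ^ (ℓ - 2) := by
      have h2 : (2 : ℕ) ^ ℓ = 4 * 2 ^ (ℓ - 2) := by
        conv_lhs => rw [show ℓ = 2 + (ℓ - 2) from by omega]
        rw [pow_add]; norm_num
      omega
    have h3 := Nat.clog_mono_right 2 h1
    rw [Nat.clog_pow 2 _ one_lt_two] at h3
    omega
  set m := 2 ^ (ℓ - (k + 2)) with hmdef
  have hm1 : 1 ≤ m := Nat.one_le_two_pow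
  have hmle : m ≤ 2 ^ ℓ := Nat.pow_le_pow_right (by norm_num) (by omega)
  have hmc : m * 2 ^ (k + 2) = 2 ^ ℓ := by
    rw [hmdef, ← pow_add]; congr 1; omega
  -- event translation
  have h2i : (2 : ℝ) ^ i = (m : ℝ) := by
    rw [hi, hceil, hmdef]
    push_cast
    rw [← zpow_natCast (2 : ℝ) (ℓ - (k + 2))]
    congr 1
    omega
  have hiω : ∀ e ω, ((h e ω : ℝ) ≤ (2 : ℝ) ^ i ↔ h e ω ≤ m) := by
    intro e ω; rw [h2i, Nat.cast_le]
  -- basic sets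
  set S : α → ℕ → Set Ω := fun e t => {ω | h e ω = t} with hSdef
  set A : α → Set Ω := fun e => {ω | h e ω ≤ m} with hAdef
  have hAeq : ∀ e, A e = ⋃ t ∈ Finset.Icc 1 m, S e t := by
    intro e
    ext ω
    simp only [hAdef, hSdef, Set.mem_setOf_eq, Set.mem_iUnion, Finset.mem_Icc, exists_prop]
    constructor
    · intro hle
      exact ⟨h e ω, ⟨(Finset.mem_Icc.mp (hrange e ω)).1, hle⟩, rfl⟩
    · rintro ⟨t, ⟨ht1, ht2⟩, rfl⟩
      exact ht2
  -- uniform measure of singleton level sets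
  have hμS : ∀ e, ∀ t ∈ Finset.Icc 1 m, μ (S e t) = ((2 : ENNReal) ^ ℓ)⁻¹ := by
    intro e t ht
    rw [← one_div]
    exact hunif e t (Finset.mem_Icc.mpr ⟨(Finset.mem_Icc.mp ht).1,
      le_trans (Finset.mem_Icc.mp ht).2 hmle⟩)
  -- null measurability of level sets
  have hSnm : ∀ e, ∀ t ∈ Finset.Icc 1 (2 ^ ℓ), NullMeasurableSet (S e t) μ := by
    intro e t ht
    apply aux_nullMeasurable
    have hcompl : (S e t)ᶜ ⊆ ⋃ t' ∈ (Finset.Icc 1 (2 ^ ℓ)).erase t, S e t' := by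
      intro ω hω
      simp only [hSdef, Set.mem_compl_iff, Set.mem_setOf_eq] at hω
      simp only [Set.mem_iUnion, exists_prop]
      exact ⟨h e ω, Finset.mem_erase.mpr ⟨fun hc => hω hc, hrange e ω⟩, rfl⟩
    have h1 : μ (S e t)ᶜ ≤ ∑ t' ∈ (Finset.Icc 1 (2 ^ ℓ)).erase t, μ (S e t') :=
      (measure_mono hcompl).trans (measure_biUnion_finset_le _ _)
    have h2 : ∑ t' ∈ (Finset.Icc 1 (2 ^ ℓ)).erase t, μ (S e t')
        = (((2 ^ ℓ - 1 : ℕ) : ENNReal)) * ((2 : ENNReal) ^ ℓ)⁻¹ := by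
      rw [Finset.sum_congr rfl (fun t' ht' => by
        rw [hunif e t' (Finset.mem_of_mem_erase ht'), one_div])]
      rw [Finset.sum_const, Finset.card_erase_of_mem ht, Nat.card_Icc]
      simp [nsmul_eq_mul]
    have h3 : μ (S e t) = ((2 : ENNReal) ^ ℓ)⁻¹ := by
      rw [← one_div]; exact hunif e t ht
    calc μ (S e t) + μ (S e t)ᶜ
        ≤ ((2 : ENNReal) ^ ℓ)⁻¹ + ((2 ^ ℓ - 1 : ℕ) : ENNReal) * ((2 : ENNReal) ^ ℓ)⁻¹ := by
          exact add_le_add h3.le (h1.trans h2.le)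
      _ = (1 + ((2 ^ ℓ - 1 : ℕ) : ENNReal)) * ((2 : ENNReal) ^ ℓ)⁻¹ := by ring
      _ = (2 : ENNReal) ^ ℓ * ((2 : ENNReal) ^ ℓ)⁻¹ := by
          congr 1
          rw [add_comm, ← Nat.cast_add_one]
          rw [show (2 ^ ℓ - 1 + 1 : ℕ) = 2 ^ ℓ from by omega]
          push_cast
          ring
      _ = 1 := ENNReal.mul_inv_cancel (pow_ne_zero ℓ (by norm_num))
          (ENNReal.pow_ne_top ENNReal.ofNat_ne_top)
  -- the probability p
  set p : ENNReal := ((2 : ENNReal) ^ (k + 2))⁻¹ with hpdef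
  have hc0 : (2 : ENNReal) ^ (k + 2) ≠ 0 := pow_ne_zero _ (by norm_num)
  have hc0' : (2 : ENNReal) ^ (k + 2) ≠ ⊤ := ENNReal.pow_ne_top ENNReal.ofNat_ne_top
  have hAnm : ∀ e, NullMeasurableSet (A e) μ := by
    intro e
    rw [hAeq]
    exact Finset.nullMeasurableSet_biUnion _
      (fun t ht => hSnm e t (Finset.mem_Icc.mpr ⟨(Finset.mem_Icc.mp ht).1,
        le_trans (Finset.mem_Icc.mp ht).2 hmle⟩))
  -- the key fraction identity
  have hfrac : (m : ENNReal) * ((2 : ENNReal) ^ ℓ)⁻¹ = p := by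
    have h2l : (2 : ENNReal) ^ ℓ = (m : ENNReal) * (2 : ENNReal) ^ (k + 2) := by
      calc (2 : ENNReal) ^ ℓ = ((2 ^ ℓ : ℕ) : ENNReal) := by push_cast; ring
        _ = ((m * 2 ^ (k + 2) : ℕ) : ENNReal) := by rw [hmc]
        _ = (m : ENNReal) * (2 : ENNReal) ^ (k + 2) := by push_cast; ring
    rw [h2l, hpdef, aux_frac m _ (by omega)]
  have hμA : ∀ e, μ (A e) = p := by
    intro e
    rw [hAeq]
    rw [measure_biUnion_finset₀
      (fun s hs t ht hst => Disjoint.aedisjoint (by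
        simp only [hSdef, Set.disjoint_left, Set.mem_setOf_eq]
        rintro ω rfl hc
        exact hst hc))
      (fun t ht => hSnm e t (Finset.mem_Icc.mpr ⟨(Finset.mem_Icc.mp ht).1,
        le_trans (Finset.mem_Icc.mp ht).2 hmle⟩))]
    rw [Finset.sum_congr rfl (hμS e), Finset.sum_const, Nat.card_Icc]
    simp only [Nat.add_sub_cancel, nsmul_eq_mul]
    exact hfrac
  -- pairwise intersection bound
  have hinter : ∀ e e', e ≠ e' → μ (A e ∩ A e') ≤ p ^ 2 := by
    intro e e' hne
    have hsub : A e ∩ A e' ⊆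
        ⋃ s ∈ Finset.Icc 1 m, ⋃ t ∈ Finset.Icc 1 m, (S e s ∩ S e' t) := by
      rintro ω ⟨h1, h2⟩
      simp only [hAdef, Set.mem_setOf_eq] at h1 h2
      simp only [Set.mem_iUnion, exists_prop]
      exact ⟨h e ω, Finset.mem_Icc.mpr ⟨(Finset.mem_Icc.mp (hrange e ω)).1, h1⟩,
        h e' ω, Finset.mem_Icc.mpr ⟨(Finset.mem_Icc.mp (hrange e' ω)).1, h2⟩, rfl, rfl⟩
    calc μ (A e ∩ A e')
        ≤ ∑ s ∈ Finset.Icc 1 m, μ (⋃ t ∈ Finset.Icc 1 m, (S e s ∩ S e' t)) :=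
          (measure_mono hsub).trans (measure_biUnion_finset_le _ _)
      _ ≤ ∑ s ∈ Finset.Icc 1 m, ∑ t ∈ Finset.Icc 1 m, μ (S e s ∩ S e' t) :=
          Finset.sum_le_sum (fun s _ => measure_biUnion_finset_le _ _)
      _ = ∑ s ∈ Finset.Icc 1 m, ∑ t ∈ Finset.Icc 1 m, μ (S e s) * μ (S e' t) :=
          Finset.sum_congr rfl (fun s _ => Finset.sum_congr rfl
            (fun t _ => hpair e e' hne s t))
      _ = ∑ s ∈ Finset.Icc 1 m, ∑ t ∈ Finset.Icc 1 m,
            ((2 : ENNReal) ^ ℓ)⁻¹ * ((2 : ENNReal) ^ ℓ)⁻¹ :=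
          Finset.sum_congr rfl (fun s hs => Finset.sum_congr rfl
            (fun t ht => by rw [hμS e s hs, hμS e' t ht]))
      _ = ((m : ENNReal) * ((2 : ENNReal) ^ ℓ)⁻¹) ^ 2 := by
          rw [Finset.sum_const, Finset.sum_const, Nat.card_Icc]
          simp only [Nat.add_sub_cancel, nsmul_eq_mul]
          ring
      _ = p ^ 2 := by rw [hfrac]
  -- good events
  set B : α → Set Ω := fun e => A e \ ⋃ e' ∈ W.erase e, A e' with hBdef
  have hBnm : ∀ e ∈ W, NullMeasurableSet (B e) μ := by
    intro e _
    exact (hAnm e).diff (Finset.nullMeasurableSet_biUnion _ (fun e' _ => hAnm e'))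
  have hBdisj : Set.Pairwise (↑W) (Function.onFun (AEDisjoint μ) B) := by
    intro e he f hf hef
    apply Disjoint.aedisjoint
    rw [Set.disjoint_left]
    rintro ω ⟨hωA, hωU⟩ ⟨hfA, _⟩
    exact hωU (Set.mem_biUnion (Finset.mem_erase.mpr ⟨hef.symm, hf⟩) hfA)
  -- the union of B's is inside the target event
  have hEsub : (⋃ e ∈ W, B e) ⊆ {ω | ∃! e, e ∈ W ∧ (h e ω : ℝ) ≤ (2 : ℝ) ^ i} := by
    intro ω hω
    simp only [hBdef, Set.mem_iUnion, Set.mem_diff, exists_prop] at hω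
    obtain ⟨e, heW, heA, heU⟩ := hω
    simp only [hAdef, Set.mem_setOf_eq] at heA
    refine ⟨e, ⟨heW, (hiω e ω).mpr heA⟩, ?_⟩
    rintro f ⟨hfW, hfle⟩
    by_contra hfe
    exact heU ⟨f, Finset.mem_erase.mpr ⟨hfe, hfW⟩, (hiω f ω).mp hfle⟩
  -- lower bound on sum of B measures via A measures
  have hAB : ∀ e ∈ W, μ (A e) ≤ μ (B e) + (N : ENNReal) * p ^ 2 := by
    intro e heW
    have hsub : A e ⊆ B e ∪ ⋃ e' ∈ W.erase e, (A e ∩ A e') := by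
      intro ω hω
      by_cases hc : ω ∈ ⋃ e' ∈ W.erase e, A e'
      · right
        simp only [Set.mem_iUnion, exists_prop] at hc ⊢
        obtain ⟨e', he', hωe'⟩ := hc
        exact ⟨e', he', hω, hωe'⟩
      · exact Or.inl ⟨hω, hc⟩
    calc μ (A e) ≤ μ (B e) + μ (⋃ e' ∈ W.erase e, (A e ∩ A e')) :=
          (measure_mono hsub).trans (measure_union_le _ _)
      _ ≤ μ (B e) + ∑ e' ∈ W.erase e, μ (A e ∩ A e') :=
          add_le_add_right (measure_biUnion_finset_le _ _) _
      _ ≤ μ (B e) + ∑ e' ∈ W.erase e, p ^ 2 :=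
          add_le_add_right (Finset.sum_le_sum (fun e' he' =>
            hinter e e' (Finset.ne_of_mem_erase he').symm)) _
      _ ≤ μ (B e) + (N : ENNReal) * p ^ 2 := by
          apply add_le_add_right
          rw [Finset.sum_const, nsmul_eq_mul]
          exact mul_le_mul_left (Nat.cast_le.mpr Finset.card_erase_le) _
  have hkey : (N : ENNReal) * p
      ≤ (∑ e ∈ W, μ (B e)) + (N : ENNReal) * ((N : ENNReal) * p ^ 2) := by
    calc (N : ENNReal) * p = ∑ e ∈ W, μ (A e) := by
          rw [Finset.sum_congr rfl (fun e _ => hμA e), Finset.sum_const, nsmul_eq_mul]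
      _ ≤ ∑ e ∈ W, (μ (B e) + (N : ENNReal) * p ^ 2) := Finset.sum_le_sum hAB
      _ = (∑ e ∈ W, μ (B e)) + (N : ENNReal) * ((N : ENNReal) * p ^ 2) := by
          rw [Finset.sum_add_distrib, Finset.sum_const, nsmul_eq_mul, ← mul_assoc]
  -- numeric inequality
  have hnat : 2 ^ (k + 2) * 2 ^ (k + 2) + 16 * (N * N) ≤ 16 * (N * 2 ^ (k + 2)) := by
    have h1 : (2 : ℕ) ^ (k + 2) = 4 * 2 ^ k := by ring
    rw [h1]
    have h2 : N * N ≤ N * 2 ^ k := Nat.mul_le_mul_left N hNle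
    have h3 : 2 ^ k * 2 ^ k ≤ 2 * N * 2 ^ k := Nat.mul_le_mul_right (2 ^ k) (le_of_lt hlt)
    nlinarith [h2, h3]
  have hle : ((2 : ENNReal) ^ (k + 2)) ^ 2 + 16 * ((N : ENNReal) * N)
      ≤ 16 * ((N : ENNReal) * (2 : ENNReal) ^ (k + 2)) := by
    rw [pow_two]
    exact_mod_cast hnat
  have hnum : 1 / 16 + (N : ENNReal) * ((N : ENNReal) * p ^ 2) ≤ (N : ENNReal) * p :=
    aux_num N _ hc0 hc0' hle
  -- put it together
  have hfin : (N : ENNReal) * ((N : ENNReal) * p ^ 2) ≠ ⊤ := by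
    apply ENNReal.mul_ne_top (ENNReal.natCast_ne_top N)
    apply ENNReal.mul_ne_top (ENNReal.natCast_ne_top N)
    exact ENNReal.pow_ne_top (ENNReal.inv_ne_top.mpr hc0)
  have hfinal : 1 / 16 ≤ ∑ e ∈ W, μ (B e) :=
    (ENNReal.add_le_add_iff_right hfin).mp (hnum.trans hkey)
  calc (1 / 16 : ENNReal) ≤ ∑ e ∈ W, μ (B e) := hfinal
    _ = μ (⋃ e ∈ W, B e) := (measure_biUnion_finset₀ hBdisj hBnm).symm
    _ ≤ μ {ω | ∃! e, e ∈ W ∧ (h e ω : ℝ) ≤ (2 : ℝ) ^ i} := measure_mono hEsub
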